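/- Let ε ∈ (0,∞), r ∈ [0,∞), and let X be a bounded real-valued random variable on a probability space (Ω, 𝓕, ℙ). Then E[|X| / (ε + √(X² + r))] < ∞ and Var(X / (ε + √(X² + r))) ≥ ε²·Var(X) / (ε + (r + sup_{ω ∈ Ω} |X(ω)|²)^{1/2})⁴. -/

import Mathlib

lemma sqrt_trick {u v : ℝ} (hu : 0 ≤ u) (hv : 0 ≤ v) (h : u^2 ≤ v^2) : u ≤ v := by
  calc u = Real.sqrt (u^2) := (Real.sqrt_sq hu).symm
    _ ≤ Real.sqrt (v^2) := Real.sqrt_le_sqrt h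
    _ = v := Real.sqrt_sq hv

lemma aux1 (r a b sa sb : ℝ) (hr : 0 ≤ r) (hsa : 0 ≤ sa) (hsb : 0 ≤ sb)
    (ha : sa^2 = a^2 + r) (hb : sb^2 = b^2 + r) (hab : a ≤ b) :
    a * sb ≤ b * sa := by
  have e1 : (b*sa)^2 = b^2*(a^2+r) := by rw [mul_pow, ha]
  have e2 : (a*sb)^2 = a^2*(b^2+r) := by rw [mul_pow, hb]
  rcases le_total 0 a with h0a | h0a
  · have h0b : 0 ≤ b := h0a.trans hab
    have hsq : (a*sb)^2 ≤ (b*sa)^2 := by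
      rw [e1, e2]; nlinarith [mul_le_mul_of_nonneg_left (mul_self_le_mul_self h0a hab) hr]
    exact sqrt_trick (mul_nonneg h0a hsb) (mul_nonneg h0b hsa) hsq
  · rcases le_total 0 b with h0b | h0b
    · calc a * sb ≤ 0 := mul_nonpos_of_nonpos_of_nonneg h0a hsb
        _ ≤ b * sa := mul_nonneg h0b hsa
    · have hsq : ((-b)*sa)^2 ≤ ((-a)*sb)^2 := by
        have : (b:ℝ)*b ≤ a*a := by nlinarith
        nlinarith [mul_le_mul_of_nonneg_left this hr]
      have := sqrt_trick (mul_nonneg (neg_nonneg.mpr h0b) hsa)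
        (mul_nonneg (neg_nonneg.mpr h0a) hsb) hsq
      linarith

lemma sign_aux (r a b sa sb : ℝ) (hr : 0 ≤ r) (hsa : 0 ≤ sa) (hsb : 0 ≤ sb)
    (ha : sa^2 = a^2 + r) (hb : sb^2 = b^2 + r) :
    0 ≤ (a * sb - b * sa) * (a - b) := by
  rcases le_total a b with h | h
  · have := aux1 r a b sa sb hr hsa hsb ha hb h
    nlinarith
  · have := aux1 r b a sb sa hr hsb hsa hb ha h
    nlinarith

set_option maxHeartbeats 1000000 in
lemma ptwise (ε r S a b : ℝ) (hε : 0 < ε) (hr : 0 ≤ r) (ha : a^2 ≤ S) (hb : b^2 ≤ S) :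
    ε^2 / (ε + Real.sqrt (r + S))^4 * (a-b)^2 ≤
      (a/(ε + Real.sqrt (a^2+r)) - b/(ε + Real.sqrt (b^2+r)))^2 := by
  have hS0 : 0 ≤ S := (sq_nonneg a).trans ha
  set sa := Real.sqrt (a^2+r) with hsa_def
  set sb := Real.sqrt (b^2+r) with hsb_def
  set sS := Real.sqrt (r+S) with hsS_def
  have hsa0 : 0 ≤ sa := Real.sqrt_nonneg _
  have hsb0 : 0 ≤ sb := Real.sqrt_nonneg _
  have hsS0 : 0 ≤ sS := Real.sqrt_nonneg _
  have hsa2 : sa^2 = a^2 + r := Real.sq_sqrt (by positivity)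
  have hsb2 : sb^2 = b^2 + r := Real.sq_sqrt (by positivity)
  have hsaS : sa ≤ sS := Real.sqrt_le_sqrt (by linarith)
  have hsbS : sb ≤ sS := Real.sqrt_le_sqrt (by linarith)
  have hDa : 0 < ε + sa := by linarith
  have hDb : 0 < ε + sb := by linarith
  have hE : 0 < ε + sS := by linarith
  have hfa : a/(ε+sa) - b/(ε+sb) = (a*(ε+sb) - b*(ε+sa))/((ε+sa)*(ε+sb)) := by
    field_simp
  have hsign := sign_aux r a b sa sb hr hsa0 hsb0 hsa2 hsb2
  have hNge : ε*(a-b)^2 ≤ (a*(ε+sb) - b*(ε+sa))*(a-b) := by nlinarith [hsign]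
  rcases eq_or_ne a b with hab | hab
  · subst hab; simp; positivity
  · have hab2 : 0 < (a-b)^2 := pow_two_pos_of_ne_zero (sub_ne_zero.mpr hab)
    have hN2 : ε^2*(a-b)^2 ≤ (a*(ε+sb) - b*(ε+sa))^2 := by
      have h1 := mul_self_le_mul_self (by positivity : (0:ℝ) ≤ ε*(a-b)^2) hNge
      have h2 : ε^2*(a-b)^2 * (a-b)^2 ≤ (a*(ε+sb) - b*(ε+sa))^2 * (a-b)^2 := by nlinarith [h1]
      exact le_of_mul_le_mul_right h2 hab2
    have h3 : (ε+sa)*(ε+sb) ≤ (ε+sS)*(ε+sS) :=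
      mul_le_mul (by linarith) (by linarith) hDb.le (by linarith)
    have hDE : ((ε+sa)*(ε+sb))^2 ≤ (ε+sS)^4 := by
      nlinarith [mul_self_le_mul_self (le_of_lt (mul_pos hDa hDb)) h3]
    calc ε^2 / (ε+sS)^4 * (a-b)^2 = ε^2*(a-b)^2 / (ε+sS)^4 := by ring
      _ ≤ (a*(ε+sb) - b*(ε+sa))^2 / ((ε+sa)*(ε+sb))^2 := by
          rw [div_le_div_iff₀ (by positivity) (by positivity)]
          exact mul_le_mul hN2 hDE (by positivity) (sq_nonneg _)
      _ = ((a*(ε+sb) - b*(ε+sa)) / ((ε+sa)*(ε+sb)))^2 := by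
          rw [div_pow]
      _ = (a/(ε+sa) - b/(ε+sb))^2 := by rw [hfa]

open MeasureTheory ProbabilityTheory
open scoped ENNReal

lemma int_bdd {Ω : Type*} [MeasurableSpace Ω] (μ : Measure Ω) [IsFiniteMeasure μ]
    (f : Ω → ℝ) (hf : Measurable f) (C : ℝ) (hC : ∀ ω, |f ω| ≤ C) :
    Integrable f μ := by
  refine Integrable.mono' (integrable_const C) hf.aestronglyMeasurable ?_
  exact Filter.Eventually.of_forall fun ω => by simpa [Real.norm_eq_abs] using hC ω

lemma nonempty_of_prob {Ω : Type*} [MeasurableSpace Ω] (μ : Measure Ω)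
    [IsProbabilityMeasure μ] : Nonempty Ω := by
  by_contra h
  rw [not_nonempty_iff] at h
  have h1 : μ Set.univ = 1 := measure_univ
  rw [Set.univ_eq_empty_iff.mpr h, measure_empty] at h1
  exact zero_ne_one h1

lemma var_prod {Ω : Type*} [MeasurableSpace Ω] (μ : Measure Ω) [IsProbabilityMeasure μ]
    (Z : Ω → ℝ) (hZ : Measurable Z) (D : ℝ) (hD : ∀ ω, |Z ω| ≤ D) :
    ∫ p : Ω × Ω, (Z p.1 - Z p.2)^2 ∂(μ.prod μ) = 2 * variance Z μ := by
  have hΩ : Nonempty Ω := nonempty_of_prob μ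
  have hD0 : 0 ≤ D := (abs_nonneg _).trans (hD hΩ.some)
  have hmem : MemLp Z 2 μ := MemLp.of_bound hZ.aestronglyMeasurable D
    (Filter.Eventually.of_forall fun ω => by simpa [Real.norm_eq_abs] using hD ω)
  have habs2 : ∀ ω, |(Z ω)^2| ≤ D^2 := fun ω => by
    rw [abs_of_nonneg (sq_nonneg _), ← sq_abs]
    exact pow_le_pow_left₀ (abs_nonneg _) (hD ω) 2
  have iZ1 : Integrable (fun p : Ω × Ω => (Z p.1)^2) (μ.prod μ) :=
    int_bdd _ _ ((hZ.comp measurable_fst).pow_const 2) (D^2) fun p => habs2 p.1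
  have iZ2 : Integrable (fun p : Ω × Ω => (Z p.2)^2) (μ.prod μ) :=
    int_bdd _ _ ((hZ.comp measurable_snd).pow_const 2) (D^2) fun p => habs2 p.2
  have iZ12 : Integrable (fun p : Ω × Ω => Z p.1 * Z p.2) (μ.prod μ) := by
    refine int_bdd _ _ ((hZ.comp measurable_fst).mul (hZ.comp measurable_snd)) (D^2) fun p => ?_
    rw [abs_mul]
    calc |Z p.1| * |Z p.2| ≤ D * D :=
          mul_le_mul (hD _) (hD _) (abs_nonneg _) hD0
      _ = D^2 := (sq D).symm
  have h1 : ∫ p : Ω × Ω, Z p.1 * Z p.2 ∂(μ.prod μ) = (∫ ω, Z ω ∂μ) * ∫ ω, Z ω ∂μ :=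
    integral_prod_mul Z Z
  have h2 : ∫ p : Ω × Ω, (Z p.1)^2 ∂(μ.prod μ) = ∫ ω, (Z ω)^2 ∂μ := by
    have := integral_prod_mul (μ := μ) (ν := μ) (fun ω => (Z ω)^2) (fun _ => (1:ℝ))
    simpa using this
  have h3 : ∫ p : Ω × Ω, (Z p.2)^2 ∂(μ.prod μ) = ∫ ω, (Z ω)^2 ∂μ := by
    have := integral_prod_mul (μ := μ) (ν := μ) (fun _ => (1:ℝ)) (fun ω => (Z ω)^2)
    simpa using this
  have e : (fun p : Ω × Ω => (Z p.1 - Z p.2)^2)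
      = fun p => ((Z p.1)^2 + (Z p.2)^2) - 2*(Z p.1 * Z p.2) := by
    funext p; ring
  have hsub := integral_sub (μ := μ.prod μ) (f := fun p : Ω × Ω => (Z p.1)^2 + (Z p.2)^2)
    (g := fun p : Ω × Ω => 2*(Z p.1 * Z p.2)) (iZ1.add iZ2) (iZ12.const_mul 2)
  have hadd := integral_add (μ := μ.prod μ) (f := fun p : Ω × Ω => (Z p.1)^2)
    (g := fun p : Ω × Ω => (Z p.2)^2) iZ1 iZ2
  rw [e, hsub, hadd, integral_const_mul, h1, h2, h3, variance_eq_sub hmem]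
  have : (∫ ω, (Z ^ 2) ω ∂μ) = ∫ ω, (Z ω)^2 ∂μ := by simp [Pi.pow_apply]
  rw [this]
  ring

set_option maxHeartbeats 1000000 in
theorem stmt3 {Ω : Type*} [MeasurableSpace Ω] (μ : Measure Ω) [IsProbabilityMeasure μ]
    (ε r : ℝ) (hε : 0 < ε) (hr : 0 ≤ r)
    (X : Ω → ℝ) (hX : Measurable X) (hb : ∃ C : ℝ, ∀ ω, |X ω| ≤ C) :
    Integrable (fun ω => |X ω| / (ε + Real.sqrt ((X ω) ^ 2 + r))) μ ∧
    ε ^ 2 * variance X μ / (ε + Real.sqrt (r + ⨆ ω, |X ω| ^ 2)) ^ 4 ≤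
      variance (fun ω => X ω / (ε + Real.sqrt ((X ω) ^ 2 + r))) μ := by
  obtain ⟨C, hC⟩ := hb
  have hΩ : Nonempty Ω := nonempty_of_prob μ
  have hC0 : 0 ≤ C := (abs_nonneg _).trans (hC hΩ.some)
  have hden : ∀ ω, ε ≤ ε + Real.sqrt ((X ω)^2 + r) := fun ω => by
    have := Real.sqrt_nonneg ((X ω)^2 + r); linarith
  have hdmeas : Measurable fun ω => ε + Real.sqrt ((X ω)^2 + r) :=
    measurable_const.add (((hX.pow_const 2).add_const r).sqrt)
  -- Part 1
  have habsY : ∀ ω, |(|X ω| / (ε + Real.sqrt ((X ω)^2 + r)))| ≤ C / ε := fun ω => by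
    rw [abs_div, abs_abs, abs_of_pos (lt_of_lt_of_le hε (hden ω))]
    exact div_le_div₀ hC0 (hC ω) hε (hden ω)
  have part1 : Integrable (fun ω => |X ω| / (ε + Real.sqrt ((X ω) ^ 2 + r))) μ :=
    int_bdd μ _ (hX.abs.div hdmeas) (C / ε) habsY
  refine ⟨part1, ?_⟩
  -- Part 2
  set Y := fun ω => X ω / (ε + Real.sqrt ((X ω) ^ 2 + r)) with hY_def
  have hYmeas : Measurable Y := hX.div hdmeas
  have hYb : ∀ ω, |Y ω| ≤ C / ε := fun ω => by
    rw [hY_def, abs_div, abs_of_pos (lt_of_lt_of_le hε (hden ω))]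
    exact div_le_div₀ hC0 (hC ω) hε (hden ω)
  set S := ⨆ ω, |X ω| ^ 2 with hS_def
  have hbdd : BddAbove (Set.range fun ω => |X ω|^2) := by
    refine ⟨C^2, ?_⟩
    rintro _ ⟨ω, rfl⟩
    exact pow_le_pow_left₀ (abs_nonneg _) (hC ω) 2
  have hS : ∀ ω, (X ω)^2 ≤ S := fun ω => by
    have := le_ciSup hbdd ω
    rw [hS_def]; simpa [sq_abs] using this
  have sqbound : ∀ (u v B : ℝ), |u| ≤ B → |v| ≤ B → |(u - v)^2| ≤ (2*B)^2 := by
    intro u v B hu hv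
    rw [abs_of_nonneg (sq_nonneg _), ← sq_abs]
    apply pow_le_pow_left₀ (abs_nonneg _)
    calc |u - v| ≤ |u| + |v| := abs_sub _ _
      _ ≤ 2*B := by linarith
  have IY : Integrable (fun p : Ω × Ω => (Y p.1 - Y p.2)^2) (μ.prod μ) :=
    int_bdd _ _ (((hYmeas.comp measurable_fst).sub (hYmeas.comp measurable_snd)).pow_const 2)
      ((2*(C/ε))^2) fun p => sqbound _ _ _ (hYb p.1) (hYb p.2)
  have IX : Integrable (fun p : Ω × Ω => (X p.1 - X p.2)^2) (μ.prod μ) :=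
    int_bdd _ _ (((hX.comp measurable_fst).sub (hX.comp measurable_snd)).pow_const 2)
      ((2*C)^2) fun p => sqbound _ _ _ (hC p.1) (hC p.2)
  have h3 : 0 ≤ ∫ p : Ω × Ω, ((Y p.1 - Y p.2)^2
      - ε^2 / (ε + Real.sqrt (r + S))^4 * (X p.1 - X p.2)^2) ∂(μ.prod μ) := by
    refine integral_nonneg fun p => sub_nonneg.mpr ?_
    exact ptwise ε r S (X p.1) (X p.2) hε hr (hS p.1) (hS p.2)
  have h4 : ∫ p : Ω × Ω, ((Y p.1 - Y p.2)^2
      - ε^2 / (ε + Real.sqrt (r + S))^4 * (X p.1 - X p.2)^2) ∂(μ.prod μ)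
      = 2 * variance Y μ - ε^2 / (ε + Real.sqrt (r + S))^4 * (2 * variance X μ) := by
    have hsub := integral_sub (μ := μ.prod μ)
      (f := fun p : Ω × Ω => (Y p.1 - Y p.2)^2)
      (g := fun p : Ω × Ω => ε^2 / (ε + Real.sqrt (r + S))^4 * (X p.1 - X p.2)^2)
      IY (IX.const_mul _)
    rw [hsub, integral_const_mul, var_prod μ Y hYmeas (C/ε) hYb, var_prod μ X hX C hC]
  have hE4 : 0 < (ε + Real.sqrt (r + S))^4 := by
    have := Real.sqrt_nonneg (r + S); positivity
  rw [div_mul_eq_mul_div, mul_comm] at h4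
  have goal_eq : ε ^ 2 * variance X μ / (ε + Real.sqrt (r + S)) ^ 4
      = ε^2 / (ε + Real.sqrt (r + S))^4 * variance X μ := by ring
  rw [goal_eq]
  have h5 : ε^2*(2*variance X μ)/(ε + Real.sqrt (r + S))^4
      = 2*(ε^2/(ε + Real.sqrt (r + S))^4 * variance X μ) := by ring
  rw [h4, h5] at h3
  linarith
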